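/- For every integer n ≥ 1 the q-Bernoulli polynomials satisfy the linear homogeneous recurrence B_{n,q}(qx) = q^n (x − 1/(q[2]_q)) B_{n-1,q}(x) − (1/[n]_q) Σ_{k=0}^{n-2} [n choose k]_q q^{k-1} b_{n-k,q} B_{k,q}(x), as an identity of real polynomials in x (the sum is empty when n = 1). -/

import Mathlib

open Polynomial Finset

/-- The q-integer [n]_q = 1 + q + ... + q^(n-1). -/
noncomputable def qInt (q : ℝ) (n : ℕ) : ℝ := ∑ i ∈ Finset.range n, q ^ i

/-- The q-factorial [n]_q! = [1]_q [2]_q ... [n]_q, with [0]_q! = 1. -/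
noncomputable def qFact (q : ℝ) : ℕ → ℝ
  | 0 => 1
  | n + 1 => qFact q n * qInt q (n + 1)

/-- The q-binomial coefficient [n choose k]_q = [n]_q! / ([k]_q! [n-k]_q!). -/
noncomputable def qBinom (q : ℝ) (n k : ℕ) : ℝ := qFact q n / (qFact q k * qFact q (n - k))

/-- The q-derivative on real polynomials, determined by D_q(x^n) = [n]_q x^(n-1). -/
noncomputable def qDeriv (q : ℝ) (p : Polynomial ℝ) : Polynomial ℝ :=
  p.sum fun n a => Polynomial.C (a * qInt q n) * Polynomial.X ^ (n - 1)

/-- The q-Bernoulli polynomials `B_{n,q}(x) = Σ_{k=0}^n [n choose k]_q b_{k,q} x^(n-k)`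
attached to the q-Bernoulli numbers (b_k). -/
noncomputable def qBernPoly (q : ℝ) (b : ℕ → ℝ) (n : ℕ) : Polynomial ℝ :=
  ∑ k ∈ Finset.range (n + 1), Polynomial.C (qBinom q n k * b k) * Polynomial.X ^ (n - k)

variable {q : ℝ}

lemma qInt_pos (hq0 : 0 < q) {n : ℕ} (hn : 1 ≤ n) : 0 < qInt q n := by
  unfold qInt
  exact Finset.sum_pos (fun i _ => pow_pos hq0 i) (by rw [Finset.nonempty_range_iff]; omega)

lemma qInt_ne (hq0 : 0 < q) {n : ℕ} (hn : 1 ≤ n) : qInt q n ≠ 0 :=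
  ne_of_gt (qInt_pos hq0 hn)

lemma qFact_pos (hq0 : 0 < q) (n : ℕ) : 0 < qFact q n := by
  induction n with
  | zero => norm_num [qFact]
  | succ m ih => exact mul_pos ih (qInt_pos hq0 (by omega))

lemma qFact_ne (hq0 : 0 < q) (n : ℕ) : qFact q n ≠ 0 := ne_of_gt (qFact_pos hq0 n)

lemma qFact_succ (n : ℕ) : qFact q (n+1) = qFact q n * qInt q (n+1) := rfl

lemma qInt_one : qInt q 1 = 1 := by simp [qInt]

lemma qInt_eq (hq1 : q ≠ 1) (n : ℕ) : qInt q n = (q^n - 1)/(q - 1) := geom_sum_eq hq1 n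

lemma qInt_split (hq1 : q ≠ 1) {k n : ℕ} (h : k ≤ n) :
    qInt q n = qInt q k + q^k * qInt q (n-k) := by
  rw [qInt_eq hq1, qInt_eq hq1, qInt_eq hq1]
  have h1 : q - 1 ≠ 0 := sub_ne_zero.mpr hq1
  field_simp
  have hp : q ^ k * q ^ (n-k) = q ^ n := by rw [← pow_add, Nat.add_sub_cancel' h]
  linear_combination -hp

lemma qInt_succ' (hq1 : q ≠ 1) (k : ℕ) : qInt q (k+1) = 1 + q * qInt q k := by
  have := qInt_split hq1 (show 1 ≤ k+1 by omega)
  simpa [qInt_one] using this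

lemma qBinom_zero (hq0 : 0 < q) (n : ℕ) : qBinom q n 0 = 1 := by
  simp [qBinom, qFact, div_self (qFact_ne hq0 n)]

lemma qBinom_self (hq0 : 0 < q) (n : ℕ) : qBinom q n n = 1 := by
  simp [qBinom, qFact, div_self (qFact_ne hq0 n)]

lemma qBinom_symm {n k : ℕ} (h : k ≤ n) : qBinom q n k = qBinom q n (n - k) := by
  simp only [qBinom]
  rw [Nat.sub_sub_self h]
  ring

lemma qBinom_sub_one (hq0 : 0 < q) {n : ℕ} (h : 1 ≤ n) : qBinom q n (n-1) = qInt q n := by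
  obtain ⟨m, rfl⟩ : ∃ m, n = m + 1 := ⟨n-1, by omega⟩
  simp only [qBinom, Nat.add_sub_cancel, qFact_succ]
  have : m + 1 - m = 1 := by omega
  rw [this]
  have h1 : qFact q 1 = 1 := by simp [qFact, qInt_one]
  rw [h1]
  field_simp [qFact_ne hq0 m]

lemma qBinom_absorb_left (hq0 : 0 < q) {n k : ℕ} (h1 : 1 ≤ k) (h2 : k ≤ n) :
    qBinom q n k * qInt q k = qInt q n * qBinom q (n-1) (k-1) := by
  obtain ⟨m, rfl⟩ : ∃ m, n = m + 1 := ⟨n-1, by omega⟩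
  obtain ⟨l, rfl⟩ : ∃ l, k = l + 1 := ⟨k-1, by omega⟩
  simp only [qBinom, Nat.add_sub_cancel, qFact_succ]
  have h3 : m + 1 - (l+1) = m - l := by omega
  rw [h3]
  have hF := qFact_ne hq0 (q := q)
  have hI1 : qInt q (l+1) ≠ 0 := qInt_ne hq0 (by omega)
  have hI2 : qInt q (m+1) ≠ 0 := qInt_ne hq0 (by omega)
  field_simp [hF, hI1, hI2]

lemma qBinom_absorb_right (hq0 : 0 < q) {n k : ℕ} (h : k < n) :
    qBinom q n k * qInt q (n-k) = qInt q n * qBinom q (n-1) k := by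
  obtain ⟨m, rfl⟩ : ∃ m, n = m + 1 := ⟨n-1, by omega⟩
  obtain ⟨d, hd⟩ : ∃ d, m + 1 - k = d + 1 := ⟨m - k, by omega⟩
  simp only [qBinom, Nat.add_sub_cancel, qFact_succ, hd]
  have h3 : m - k = d := by omega
  rw [h3]
  have hF := qFact_ne hq0 (q := q)
  have hI1 : qInt q (d+1) ≠ 0 := qInt_ne hq0 (by omega)
  have hI2 : qInt q (m+1) ≠ 0 := qInt_ne hq0 (by omega)
  field_simp [hF, hI1, hI2]

lemma qBinom_comp (hq0 : 0 < q) {j k n : ℕ} (hj : j ≤ k) (hk : k ≤ n) :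
    qBinom q n k * qBinom q k j = qBinom q n j * qBinom q (n-j) (k-j) := by
  simp only [qBinom]
  have h1 : n - j - (k - j) = n - k := by omega
  rw [h1]
  have hF := qFact_ne hq0 (q := q)
  field_simp [hF]

lemma b_one_eq (hq0 : 0 < q) {b : ℕ → ℝ} (hb0 : b 0 = 1)
    (hb2 : ∑ k ∈ Finset.range 2, qBinom q 2 k * b k = 0) : qInt q 2 * b 1 = -1 := by
  simp only [Finset.sum_range_succ, Finset.sum_range_zero, zero_add] at hb2
  rw [qBinom_zero hq0, hb0] at hb2
  have h1 : qBinom q 2 1 = qInt q 2 := qBinom_sub_one hq0 (by omega)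
  rw [h1] at hb2
  linarith

lemma sum_range_triangle (f : ℕ → ℕ → ℝ) (n : ℕ) :
    ∑ k ∈ Finset.range n, ∑ j ∈ Finset.range (k+1), f j k
      = ∑ j ∈ Finset.range n, ∑ k ∈ Finset.Ico j n, f j k := by
  induction n with
  | zero => simp
  | succ n ih =>
    rw [Finset.sum_range_succ, ih]
    conv_rhs => rw [Finset.sum_range_succ]
    have h1 : ∀ j ∈ Finset.range n,
        ∑ k ∈ Finset.Ico j (n+1), f j k = ∑ k ∈ Finset.Ico j n, f j k + f j n := by
      intro j hj
      rw [Finset.sum_Ico_succ_top (by simp at hj; omega)]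
    rw [Finset.sum_congr rfl h1, Finset.sum_add_distrib]
    have h2 : ∑ k ∈ Finset.Ico n (n+1), f n k = f n n := by
      rw [Finset.sum_Ico_succ_top le_rfl, Finset.Ico_self, Finset.sum_empty, zero_add]
    rw [h2, Finset.sum_range_succ]
    ring

/-- the convolution T_k -/
noncomputable def Tconv (q : ℝ) (b : ℕ → ℝ) (k : ℕ) : ℝ :=
  ∑ j ∈ Finset.range (k+1), qBinom q k j * q^j * b j * b (k-j)

lemma Tconv_zero (hq0 : 0 < q) {b : ℕ → ℝ} (hb0 : b 0 = 1) : Tconv q b 0 = 1 := by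
  simp [Tconv, qBinom_zero hq0, hb0]

lemma Tsum (hq0 : 0 < q) {b : ℕ → ℝ} (hb0 : b 0 = 1)
    (hb : ∀ n : ℕ, 2 ≤ n → ∑ k ∈ Finset.range n, qBinom q n k * b k = 0)
    {n : ℕ} (hn : 1 ≤ n) :
    ∑ k ∈ Finset.range n, qBinom q n k * Tconv q b k
      = qInt q n * q^(n-1) * b (n-1) := by
  obtain ⟨m, rfl⟩ : ∃ m, n = m + 1 := ⟨n-1, by omega⟩
  have step1 : ∀ k ∈ Finset.range (m+1), qBinom q (m+1) k * Tconv q b k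
      = ∑ j ∈ Finset.range (k+1),
          qBinom q (m+1) j * q^j * b j * (qBinom q (m+1-j) (k-j) * b (k-j)) := by
    intro k hk
    simp only [Finset.mem_range] at hk
    rw [Tconv, Finset.mul_sum]
    refine Finset.sum_congr rfl (fun j hj => ?_)
    simp only [Finset.mem_range] at hj
    have hcomp := qBinom_comp hq0 (show j ≤ k by omega) (show k ≤ m+1 by omega)
    calc qBinom q (m+1) k * (qBinom q k j * q^j * b j * b (k-j))
        = (qBinom q (m+1) k * qBinom q k j) * q^j * b j * b (k-j) := by ring
      _ = qBinom q (m+1) j * q^j * b j * (qBinom q (m+1-j) (k-j) * b (k-j)) := by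
          rw [hcomp]; ring
  rw [Finset.sum_congr rfl step1, sum_range_triangle
    (fun j k => qBinom q (m+1) j * q^j * b j * (qBinom q (m+1-j) (k-j) * b (k-j))) (m+1)]
  have step2 : ∀ j ∈ Finset.range (m+1),
      ∑ k ∈ Finset.Ico j (m+1), qBinom q (m+1) j * q^j * b j * (qBinom q (m+1-j) (k-j) * b (k-j))
        = qBinom q (m+1) j * q^j * b j *
            ∑ i ∈ Finset.range (m+1-j), qBinom q (m+1-j) i * b i := by
    intro j hj
    rw [Finset.mul_sum, Finset.sum_Ico_eq_sum_range]
    refine Finset.sum_congr rfl (fun i hi => ?_)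
    simp only [Nat.add_sub_cancel_left]
  rw [Finset.sum_congr rfl step2, Finset.sum_range_succ]
  have step3 : ∀ j ∈ Finset.range m,
      qBinom q (m+1) j * q^j * b j * ∑ i ∈ Finset.range (m+1-j), qBinom q (m+1-j) i * b i
        = 0 := by
    intro j hj
    simp only [Finset.mem_range] at hj
    rw [hb (m+1-j) (by omega), mul_zero]
  rw [Finset.sum_eq_zero step3, zero_add]
  have h4 : m + 1 - m = 1 := by omega
  rw [h4]
  have h5 : qBinom q (m+1) m = qInt q (m+1) := by
    have h := qBinom_sub_one hq0 (show 1 ≤ m+1 by omega)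
    simpa using h
  rw [h5]
  simp [qBinom_zero hq0, hb0, Nat.add_sub_cancel]

lemma qBinom_split (hq0 : 0 < q) (hq1 : q ≠ 1) {m j : ℕ} (hj : j < m) :
    qBinom q m j = qBinom q (m+1) (j+1) - q^(j+1) * qBinom q m (j+1) := by
  have hI : qInt q (m+1) ≠ 0 := qInt_ne hq0 (by omega)
  have h1 : qBinom q (m+1) (j+1) * qInt q (j+1) = qInt q (m+1) * qBinom q m j := by
    have h := qBinom_absorb_left hq0 (show 1 ≤ j+1 by omega) (show j+1 ≤ m+1 by omega)
    simpa using h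
  have h2 : qBinom q (m+1) (j+1) * qInt q (m-j) = qInt q (m+1) * qBinom q m (j+1) := by
    have h := qBinom_absorb_right hq0 (show j+1 < m+1 by omega)
    simpa using h
  have h3 : qInt q (m+1) = qInt q (j+1) + q^(j+1) * qInt q (m-j) := by
    have h := qInt_split hq1 (show j+1 ≤ m+1 by omega)
    simpa using h
  apply mul_left_cancel₀ hI
  linear_combination -h1 - q^(j+1) * h2 - qBinom q (m+1) (j+1) * h3

lemma Qlem (hq0 : 0 < q) (hq1 : q ≠ 1) {b : ℕ → ℝ} (hb0 : b 0 = 1)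
    (hb : ∀ n : ℕ, 2 ≤ n → ∑ k ∈ Finset.range n, qBinom q n k * b k = 0)
    {m : ℕ} (hm : 1 ≤ m) :
    ∑ j ∈ Finset.range m, qBinom q m j * (b (j+1) + q^j * b j) = -(q^m * b m) := by
  have e1 : ∑ j ∈ Finset.range m, qBinom q m j * (b (j+1) + q^j * b j)
      = ∑ j ∈ Finset.range m, (qBinom q (m+1) (j+1) * b (j+1)
          - q^(j+1) * (qBinom q m (j+1) * b (j+1)) + q^j * (qBinom q m j * b j)) := by
    refine Finset.sum_congr rfl (fun j hj => ?_)
    simp only [Finset.mem_range] at hj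
    rw [qBinom_split hq0 hq1 hj]
    ring
  rw [e1, Finset.sum_add_distrib, Finset.sum_sub_distrib]
  have hA : ∑ k ∈ Finset.range (m+1), qBinom q (m+1) k * b k
      = (∑ j ∈ Finset.range m, qBinom q (m+1) (j+1) * b (j+1)) + qBinom q (m+1) 0 * b 0 :=
    Finset.sum_range_succ' _ m
  have hb' : ∑ k ∈ Finset.range (m+1), qBinom q (m+1) k * b k = 0 := hb (m+1) (by omega)
  rw [hb', qBinom_zero hq0, hb0] at hA
  have hB : ∑ k ∈ Finset.range (m+1), q^k * (qBinom q m k * b k)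
      = (∑ j ∈ Finset.range m, q^(j+1) * (qBinom q m (j+1) * b (j+1)))
        + q^0 * (qBinom q m 0 * b 0) :=
    Finset.sum_range_succ' _ m
  have hB2 : ∑ k ∈ Finset.range (m+1), q^k * (qBinom q m k * b k)
      = (∑ j ∈ Finset.range m, q^j * (qBinom q m j * b j)) + q^m * (qBinom q m m * b m) :=
    Finset.sum_range_succ _ m
  rw [qBinom_zero hq0, hb0] at hB
  rw [qBinom_self hq0] at hB2
  linarith

lemma starstar (hq0 : 0 < q) (hq1 : q ≠ 1) {b : ℕ → ℝ} (hb0 : b 0 = 1)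
    (hb : ∀ n : ℕ, 2 ≤ n → ∑ k ∈ Finset.range n, qBinom q n k * b k = 0)
    (r : ℕ) : 1 ≤ r →
    Tconv q b r = -(q * qInt q (r-1) * b r) - q^(r-1) * qInt q r * b (r-1) := by
  induction r using Nat.strong_induction_on with
  | _ r IH =>
  intro hr
  obtain ⟨m, rfl⟩ : ∃ m, r = m + 1 := ⟨r-1, by omega⟩
  simp only [Nat.add_sub_cancel]
  rcases Nat.eq_zero_or_pos m with hm | hm
  · subst hm
    have hb1 : qInt q 2 * b 1 = -1 := b_one_eq hq0 hb0 (hb 2 le_rfl)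
    have hI2 : qInt q 2 = 1 + q := by
      simp [qInt, Finset.sum_range_succ]
    have hI0 : qInt q 0 = 0 := by simp [qInt]
    have hT1 : Tconv q b 1 = b 1 + q * b 1 := by
      simp [Tconv, Finset.sum_range_succ, qBinom_zero hq0, qBinom_self hq0, hb0]
    rw [hT1, hI0, qInt_one, hb0]
    rw [hI2] at hb1
    linear_combination hb1
  · -- main case, r = m+1 with m ≥ 1
    have hne : qInt q (m+1+1) ≠ 0 := qInt_ne hq0 (by omega)
    have hTop : qBinom q (m+1+1) (m+1) = qInt q (m+1+1) := by
      have h := qBinom_sub_one hq0 (show 1 ≤ m+1+1 by omega)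
      simpa using h
    have hTop1 : qBinom q (m+1) m = qInt q (m+1) := by
      have h := qBinom_sub_one hq0 (show 1 ≤ m+1 by omega)
      simpa using h
    have hT := Tsum hq0 hb0 hb (show 1 ≤ m+1+1 by omega)
    rw [Finset.sum_range_succ, Finset.sum_range_succ'] at hT
    rw [qBinom_zero hq0, Tconv_zero hq0 hb0, hTop] at hT
    simp only [Nat.add_sub_cancel] at hT
    norm_num at hT
    have hpt : ∀ j ∈ Finset.range m, qBinom q (m+1+1) (j+1) * Tconv q b (j+1)
        = -(qInt q (m+1+1) * (qBinom q (m+1) j * (b (j+1) + q^j * b j)))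
          + qBinom q (m+1+1) (j+1) * b (j+1) := by
      intro j hj
      simp only [Finset.mem_range] at hj
      have hIH : Tconv q b (j+1) = -(q * qInt q j * b (j+1)) - q^j * qInt q (j+1) * b j := by
        have h := IH (j+1) (by omega) (by omega)
        simpa using h
      have habs : qBinom q (m+1+1) (j+1) * qInt q (j+1)
          = qInt q (m+1+1) * qBinom q (m+1) j := by
        have h := qBinom_absorb_left hq0 (show 1 ≤ j+1 by omega) (show j+1 ≤ m+1+1 by omega)
        simpa using h
      have hs : qInt q (j+1) = 1 + q * qInt q j := qInt_succ' hq1 j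
      rw [hIH]
      linear_combination (-(b (j+1) + q^j * b j)) * habs + (qBinom q (m+1+1) (j+1) * b (j+1)) * hs
    have hsum : ∑ j ∈ Finset.range m, qBinom q (m+1+1) (j+1) * Tconv q b (j+1)
        = -(qInt q (m+1+1) * ∑ j ∈ Finset.range m, qBinom q (m+1) j * (b (j+1) + q^j * b j))
          + ∑ j ∈ Finset.range m, qBinom q (m+1+1) (j+1) * b (j+1) := by
      rw [Finset.sum_congr rfl hpt, Finset.sum_add_distrib, Finset.sum_neg_distrib,
        Finset.mul_sum]
    have hQ := Qlem hq0 hq1 hb0 hb (show 1 ≤ m+1 by omega)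
    rw [Finset.sum_range_succ, hTop1] at hQ
    have hC := hb (m+1+1) (by omega)
    rw [Finset.sum_range_succ, Finset.sum_range_succ'] at hC
    rw [qBinom_zero hq0, hb0, hTop] at hC
    norm_num at hC
    have hs2 : qInt q (m+1) = 1 + q * qInt q m := qInt_succ' hq1 m
    have key : qInt q (m+1+1) * Tconv q b (m+1)
        = qInt q (m+1+1) * (-(q * qInt q m * b (m+1)) - q^m * qInt q (m+1) * b m) := by
      linear_combination hT - hsum + qInt q (m+1+1) * hQ - hC
        - qInt q (m+1+1) * b (m+1) * hs2
    exact mul_left_cancel₀ hne key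

lemma star (hq0 : 0 < q) (hq1 : q ≠ 1) {b : ℕ → ℝ} (hb0 : b 0 = 1)
    (hb : ∀ n : ℕ, 2 ≤ n → ∑ k ∈ Finset.range n, qBinom q n k * b k = 0)
    (m : ℕ) :
    qInt q 2 * (∑ j ∈ Finset.range m, qBinom q (m+1) j * q^j * b j * b (m+1-j))
      = -(qInt q 2 * q * qInt q (m+1) * b (m+1)) - q^(m+1) * qInt q (m+1) * b m := by
  have hT := starstar hq0 hq1 hb0 hb (m+1) (by omega)
  simp only [Nat.add_sub_cancel] at hT
  have hTop1 : qBinom q (m+1) m = qInt q (m+1) := by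
    have h := qBinom_sub_one hq0 (show 1 ≤ m+1 by omega)
    simpa using h
  have hTdef : Tconv q b (m+1)
      = (∑ j ∈ Finset.range m, qBinom q (m+1) j * q^j * b j * b (m+1-j))
        + qInt q (m+1) * q^m * b m * b 1 + q^(m+1) * b (m+1) := by
    rw [Tconv, Finset.sum_range_succ, Finset.sum_range_succ]
    have e1 : m+1-m = 1 := by omega
    have e2 : m+1-(m+1) = 0 := by omega
    rw [e1, e2, hTop1, qBinom_self hq0, hb0]
    ring
  rw [hTdef] at hT
  have hb1 : qInt q 2 * b 1 = -1 := b_one_eq hq0 hb0 (hb 2 le_rfl)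
  have hI2v : qInt q 2 = 1 + q := by simp [qInt, Finset.sum_range_succ]
  have hs3 : qInt q (m+1) = qInt q m + q^m := by simp [qInt, Finset.sum_range_succ]
  linear_combination qInt q 2 * hT - qInt q (m+1) * q^m * b m * hb1
    - q^m * qInt q (m+1) * b m * hI2v + qInt q 2 * q * b (m+1) * hs3

lemma qBinom_pascal (hq0 : 0 < q) (hq1 : q ≠ 1) {n k : ℕ} (h1 : 1 ≤ k) (h2 : k ≤ n) :
    qBinom q (n+1) k = q^(n+1-k) * qBinom q n (k-1) + qBinom q n k := by
  have hs := qBinom_split hq0 hq1 (show n-k < n by omega)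
  have e1 : n-k+1 = n+1-k := by omega
  rw [e1] at hs
  have s1 : qBinom q (n+1) k = qBinom q (n+1) (n+1-k) := qBinom_symm (by omega)
  have s2 : qBinom q n k = qBinom q n (n-k) := qBinom_symm h2
  have s3 : qBinom q n (k-1) = qBinom q n (n+1-k) := by
    have h := qBinom_symm (show k-1 ≤ n by omega) (q := q) (n := n)
    rw [h]
    congr 1
    omega
  rw [s1, s2, s3]
  linarith [hs]

lemma coeff_sum_form (c : ℕ → ℝ) (n m : ℕ) :
    (∑ k ∈ Finset.range (n+1), Polynomial.C (c k) * Polynomial.X^(n-k)).coeff m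
      = if m ≤ n then c (n-m) else 0 := by
  rw [Polynomial.finset_sum_coeff]
  simp only [Polynomial.coeff_C_mul, Polynomial.coeff_X_pow, mul_ite, mul_one, mul_zero]
  by_cases h : m ≤ n
  · rw [if_pos h, Finset.sum_eq_single (n-m)]
    · rw [if_pos (by omega)]
    · intro k hk hne
      simp only [Finset.mem_range] at hk
      rw [if_neg (by omega)]
    · intro hk
      simp only [Finset.mem_range] at hk
      omega
  · rw [if_neg h]
    apply Finset.sum_eq_zero
    intro k hk
    simp only [Finset.mem_range] at hk
    rw [if_neg (by omega)]

lemma coeff_qBernPoly (b : ℕ → ℝ) (n m : ℕ) :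
    (qBernPoly q b n).coeff m = if m ≤ n then qBinom q n (n-m) * b (n-m) else 0 := by
  rw [qBernPoly]
  exact coeff_sum_form (fun k => qBinom q n k * b k) n m

lemma qBernPoly_comp (b : ℕ → ℝ) (n : ℕ) :
    (qBernPoly q b n).comp (Polynomial.C q * Polynomial.X)
      = ∑ k ∈ Finset.range (n+1),
          Polynomial.C (qBinom q n k * b k * q^(n-k)) * Polynomial.X^(n-k) := by
  rw [qBernPoly, Polynomial.sum_comp]
  refine Finset.sum_congr rfl (fun k hk => ?_)
  rw [Polynomial.mul_comp, Polynomial.C_comp, Polynomial.pow_comp, Polynomial.X_comp, mul_pow,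
    ← Polynomial.C_pow, ← mul_assoc, ← Polynomial.C_mul]

lemma coeff_qBernPoly_comp (b : ℕ → ℝ) (n m : ℕ) (hm : m ≤ n) :
    ((qBernPoly q b n).comp (Polynomial.C q * Polynomial.X)).coeff m
      = qBinom q n (n-m) * b (n-m) * q^m := by
  rw [qBernPoly_comp, coeff_sum_form, if_pos hm]
  congr 2
  omega

lemma hre_lemma (hq0 : 0 < q) (b : ℕ → ℝ) {m N : ℕ} (hm : m ≤ N) :
    ∑ k ∈ Finset.range N,
        (if m ≤ k then qBinom q (N+1) k * (q^k/q) * b (N+1-k) * (qBinom q k (k-m) * b (k-m))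
         else 0)
      = qBinom q (N+1) m * q^m / q
          * ∑ j ∈ Finset.range (N-m), qBinom q (N-m+1) j * q^j * b j * b (N-m+1-j) := by
  rw [← Finset.sum_filter]
  have hfil : Finset.filter (fun k => m ≤ k) (Finset.range N) = Finset.Ico m N := by
    ext x
    simp only [Finset.mem_filter, Finset.mem_range, Finset.mem_Ico]
    omega
  rw [hfil, Finset.sum_Ico_eq_sum_range, Finset.mul_sum]
  refine Finset.sum_congr rfl (fun i hi => ?_)
  simp only [Finset.mem_range] at hi
  have e1 : m + i - m = i := by omega
  have e2 : N + 1 - (m + i) = N - m + 1 - i := by omega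
  rw [e1, e2]
  have hsym : qBinom q (m+i) i = qBinom q (m+i) m := by
    rw [qBinom_symm (show i ≤ m+i by omega)]
    congr 1
    omega
  rw [hsym]
  have hcomp : qBinom q (N+1) (m+i) * qBinom q (m+i) m
      = qBinom q (N+1) m * qBinom q (N-m+1) i := by
    have h := qBinom_comp hq0 (show m ≤ m+i by omega) (show m+i ≤ N+1 by omega)
    rw [e1] at h
    rw [show N+1-m = N-m+1 by omega] at h
    exact h
  linear_combination (q^(m+i)/q * b (N-m+1-i) * b i) * hcomp

lemma coeff_X_mul_qBern (b : ℕ → ℝ) (N m : ℕ) :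
    (Polynomial.X * qBernPoly q b N).coeff m
      = if 1 ≤ m ∧ m ≤ N+1 then qBinom q N (N+1-m) * b (N+1-m) else 0 := by
  cases m with
  | zero => simp [Polynomial.mul_coeff_zero]
  | succ t =>
    rw [Polynomial.coeff_X_mul, coeff_qBernPoly]
    by_cases h : t ≤ N
    · rw [if_pos h, if_pos ⟨by omega, by omega⟩, show N+1-(t+1) = N - t by omega]
    · rw [if_neg h, if_neg (by omega)]


/-- The q-Bernoulli polynomials satisfy the linear homogeneous recurrence
`B_{n,q}(qx) = q^n (x − 1/(q[2]_q)) B_{n-1,q}(x)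
  − (1/[n]_q) Σ_{k=0}^{n-2} [n choose k]_q q^(k-1) b_{n-k,q} B_{k,q}(x)` for n ≥ 1. -/
theorem qBernoulli_recurrence (q : ℝ) (hq0 : 0 < q) (hq1 : q < 1)
    (b : ℕ → ℝ) (hb0 : b 0 = 1)
    (hb : ∀ n : ℕ, 2 ≤ n → ∑ k ∈ Finset.range n, qBinom q n k * b k = 0)
    (n : ℕ) (hn : 1 ≤ n) :
    (qBernPoly q b n).comp (Polynomial.C q * Polynomial.X)
      = Polynomial.C (q ^ n) * (Polynomial.X - Polynomial.C (1 / (q * qInt q 2)))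
          * qBernPoly q b (n - 1)
        - Polynomial.C (1 / qInt q n)
          * ∑ k ∈ Finset.range (n - 1),
              Polynomial.C (qBinom q n k * (q ^ k / q) * b (n - k)) * qBernPoly q b k := by
  have hq1' : q ≠ 1 := ne_of_lt hq1
  obtain ⟨N, rfl⟩ : ∃ N, n = N + 1 := ⟨n-1, by omega⟩
  simp only [Nat.add_sub_cancel]
  apply Polynomial.ext
  intro m
  rw [mul_assoc, sub_mul, Polynomial.coeff_sub, Polynomial.coeff_C_mul, Polynomial.coeff_sub,
    Polynomial.coeff_C_mul, Polynomial.coeff_C_mul, Polynomial.finset_sum_coeff]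
  simp only [Polynomial.coeff_C_mul, coeff_qBernPoly, coeff_X_mul_qBern]
  by_cases hm : m ≤ N + 1
  · rw [coeff_qBernPoly_comp _ _ _ hm]
    rcases Nat.lt_or_ge m (N+1) with hmN | hmN
    · have hm2 : m ≤ N := by omega
      rw [if_pos hm2]
      simp only [mul_ite, mul_zero]
      rw [hre_lemma hq0 b hm2]
      have hstar := star hq0 hq1' hb0 hb (N-m)
      by_cases hm0 : 1 ≤ m
      · rw [if_pos (⟨hm0, by omega⟩ : 1 ≤ m ∧ m ≤ N+1)]
        have e3 : N + 1 - m = N - m + 1 := by omega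
        rw [e3]
        have habs1 : qBinom q (N+1) (N-m+1) * qInt q (N-m+1)
            = qInt q (N+1) * qBinom q N (N-m) := by
          have h := qBinom_absorb_left hq0 (show 1 ≤ N-m+1 by omega) (show N-m+1 ≤ N+1 by omega)
          simpa using h
        have hsy3 : qBinom q (N+1) m = qBinom q (N+1) (N-m+1) := by
          rw [show N-m+1 = N+1-m by omega]
          exact qBinom_symm (by omega)
        have hpas : qBinom q (N+1) m = q^(N-m+1) * qBinom q N (m-1) + qBinom q N m := by
          have h := qBinom_pascal hq0 hq1' hm0 hm2
          rw [show N+1-m = N-m+1 by omega] at h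
          exact h
        have hsy1 : qBinom q N (m-1) = qBinom q N (N-m+1) := by
          rw [show N-m+1 = N-(m-1) by omega]
          exact qBinom_symm (by omega)
        have hsy2 : qBinom q N m = qBinom q N (N-m) := qBinom_symm hm2
        have hpow : q^m * q^(N-m+1) = q^(N+1) := by
          rw [← pow_add]
          congr 1
          omega
        have h2 : qInt q 2 ≠ 0 := qInt_ne hq0 (by omega)
        have hN1 : qInt q (N+1) ≠ 0 := qInt_ne hq0 (by omega)
        field_simp
        linear_combination (qBinom q (N+1) m * q^m) * hstar
          + (-(q * qInt q 2 * q^m * qInt q (N-m+1) * b (N-m+1))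
             - q^m * q^(N-m+1) * qInt q (N-m+1) * b (N-m)
             - q * qInt q 2 * qInt q (N+1) * q^m * b (N-m+1)) * hsy3
          + (-(q * qInt q 2 * q^m * b (N-m+1)) - q^m * q^(N-m+1) * b (N-m)) * habs1
          + (-(qInt q (N+1) * qBinom q N (N-m) * b (N-m))
             - q * qInt q 2 * qInt q (N+1) * qBinom q N (N-m+1) * b (N-m+1)) * hpow
          + (q * qInt q 2 * qInt q (N+1) * q^m * b (N-m+1)) * hpas
          + (q^(N-m+1) * q * qInt q 2 * qInt q (N+1) * q^m * b (N-m+1)) * hsy1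
          + (q * qInt q 2 * qInt q (N+1) * q^m * b (N-m+1)) * hsy2
          + (2*q * qInt q 2 * qInt q (N+1) * qBinom q N (N-m+1) * b (N-m+1)) * hpow
      · have hm00 : m = 0 := by omega
        subst hm00
        rw [if_neg (by omega)]
        simp only [Nat.sub_zero] at hstar ⊢
        rw [qBinom_self hq0, qBinom_self hq0, qBinom_zero hq0]
        have h2 : qInt q 2 ≠ 0 := qInt_ne hq0 (by omega)
        have hN1 : qInt q (N+1) ≠ 0 := qInt_ne hq0 (by omega)
        field_simp
        linear_combination hstar
    · have hm' : m = N + 1 := by omega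
      subst hm'
      rw [if_pos ⟨by omega, le_rfl⟩, if_neg (by omega)]
      simp only [Nat.sub_self]
      rw [qBinom_zero hq0, qBinom_zero hq0, hb0]
      have hz : ∀ k ∈ Finset.range N,
          qBinom q (N+1) k * (q^k/q) * b (N+1-k)
            * (if N+1 ≤ k then qBinom q k (k-(N+1)) * b (k-(N+1)) else 0) = 0 := by
        intro k hk
        simp only [Finset.mem_range] at hk
        rw [if_neg (by omega), mul_zero]
      rw [Finset.sum_congr rfl hz]
      simp
  · rw [qBernPoly_comp, coeff_sum_form, if_neg hm]
    rw [if_neg (by omega), if_neg (by omega)]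
    have hz : ∀ k ∈ Finset.range N,
        qBinom q (N+1) k * (q^k/q) * b (N+1-k) * (if m ≤ k then qBinom q k (k-m) * b (k-m) else 0)
          = 0 := by
      intro k hk
      simp only [Finset.mem_range] at hk
      rw [if_neg (by omega), mul_zero]
    rw [Finset.sum_congr rfl hz]
    simp
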